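/- Under Assumptions MD and SCD*, a set of pairwise distinct bundles S = {b_1,…,b_m} ⊆ B is a minimal optimal menu if and only if both of the following hold: (i) for every t ∈ T there exists i ∈ {1,…,m} with φ(b_i,t) = max_{b∈B} φ(b,t); and (ii) there exists a bijection ρ of {1,…,m} such that φ(b_{ρ(1)},t0) < φ(b_{ρ(2)},t0) < ⋯ < φ(b_{ρ(m)},t0), φ(b_{ρ(1)},t1) > φ(b_{ρ(2)},t1) > ⋯ > φ(b_{ρ(m)},t1), and for every i ∈ {2,…,m−1}: (φ(b_{ρ(i−1)},t1) − φ(b_{ρ(i)},t1))/(φ(b_{ρ(i)},t1) − φ(b_{ρ(i+1)},t1)) < (φ(b_{ρ(i−1)},t0) − φ(b_{ρ(i)},t0))/(φ(b_{ρ(i)},t0) − φ(b_{ρ(i+1)},t0)). -/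

import Mathlib

namespace Paper

abbrev Bundle (n : ℕ) := Finset (Fin n)

variable {n : ℕ}

/-- A stochastic bundle: nonnegative weights on bundles summing to one. -/
def IsStoch (a : Bundle n → ℝ) : Prop :=
  (∀ b, 0 ≤ a b) ∧ ∑ b, a b = 1

/-- The point mass at a bundle, viewed as a stochastic bundle. -/
def pt (b : Bundle n) : Bundle n → ℝ := fun b' => if b' = b then 1 else 0

/-- Virtual value of a stochastic bundle (linear extension). -/
def phiA (φ : Bundle n → ℝ → ℝ) (a : Bundle n → ℝ) (t : ℝ) : ℝ :=
  ∑ b, a b * φ b t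

/-- A function is single-crossing on a set: its sign is monotone there. -/
def SingleCrossingOn (g : ℝ → ℝ) (T : Set ℝ) : Prop :=
  MonotoneOn (fun t => Real.sign (g t)) T ∨ AntitoneOn (fun t => Real.sign (g t)) T

/-- Assumption SCD*: differences of virtual values of stochastic bundles are
single-crossing in the type. -/
def SCDstar (φ : Bundle n → ℝ → ℝ) (t0 t1 : ℝ) : Prop :=
  ∀ a a' : Bundle n → ℝ, IsStoch a → IsStoch a' →
    SingleCrossingOn (fun t => phiA φ a t - phiA φ a' t) (Set.Icc t0 t1)

/-- Assumption MD: differences of virtual values of deterministic bundles are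
monotone in the type. -/
def MD (φ : Bundle n → ℝ → ℝ) (t0 t1 : ℝ) : Prop :=
  ∀ b b' : Bundle n,
    MonotoneOn (fun t => φ b t - φ b' t) (Set.Icc t0 t1) ∨
    AntitoneOn (fun t => φ b t - φ b' t) (Set.Icc t0 t1)

/-- No two distinct bundles have identical virtual value functions on T. -/
def Distinct (φ : Bundle n → ℝ → ℝ) (t0 t1 : ℝ) : Prop :=
  ∀ b b' : Bundle n, b ≠ b' → ∃ t ∈ Set.Icc t0 t1, φ b t ≠ φ b' t

/-- A stochastic bundle is very weakly dominated. -/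
def VWD (φ : Bundle n → ℝ → ℝ) (t0 t1 : ℝ) (a : Bundle n → ℝ) : Prop :=
  ∃ a' : Bundle n → ℝ, IsStoch a' ∧ a' ≠ a ∧
    ∀ t ∈ Set.Icc t0 t1, phiA φ a t ≤ phiA φ a' t

/-- A bundle is a never strict best response. -/
def NeverStrictBR (φ : Bundle n → ℝ → ℝ) (t0 t1 : ℝ) (b : Bundle n) : Prop :=
  ∀ t ∈ Set.Icc t0 t1, ∃ b' : Bundle n, b' ≠ b ∧ φ b t ≤ φ b' t

/-- A menu is optimal if at every type some element attains the upper envelope. -/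
def OptimalMenu (φ : Bundle n → ℝ → ℝ) (t0 t1 : ℝ) (S : Finset (Bundle n)) : Prop :=
  ∀ t ∈ Set.Icc t0 t1, ∃ b ∈ S, ∀ b' : Bundle n, φ b' t ≤ φ b t

/-- A minimal optimal menu. -/
def MinimalOptimalMenu (φ : Bundle n → ℝ → ℝ) (t0 t1 : ℝ) (S : Finset (Bundle n)) : Prop :=
  OptimalMenu φ t0 t1 S ∧ ∀ S' : Finset (Bundle n), S' ⊂ S → ¬ OptimalMenu φ t0 t1 S'

/-- A nested menu: any two elements are comparable under set inclusion. -/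
def IsNestedMenu (S : Finset (Bundle n)) : Prop :=
  ∀ b1 ∈ S, ∀ b2 ∈ S, b1 ⊆ b2 ∨ b2 ⊆ b1

/-- A tree menu: a nonempty root contained in every nonempty element, and two
incomparable elements. -/
def IsTreeMenu (S : Finset (Bundle n)) : Prop :=
  (∃ r ∈ S, r ≠ (∅ : Bundle n) ∧ ∀ b ∈ S, b ≠ (∅ : Bundle n) → r ⊆ b) ∧
  (∃ b1 ∈ S, ∃ b2 ∈ S, ¬ b1 ⊆ b2 ∧ ¬ b2 ⊆ b1)

-- ===== auxiliary lemmas =====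

lemma phiA_pt (φ : Bundle n → ℝ → ℝ) (b : Bundle n) (t : ℝ) : phiA φ (pt b) t = φ b t := by
  simp [phiA, pt, ite_mul, Finset.sum_ite_eq']

lemma isStoch_pt (b : Bundle n) : IsStoch (pt b) := by
  constructor
  · intro b'; unfold pt; split <;> norm_num
  · simp [pt]

def mix (l : ℝ) (b1 b2 : Bundle n) : Bundle n → ℝ :=
  fun b => l * pt b1 b + (1 - l) * pt b2 b

lemma isStoch_mix {l : ℝ} (h0 : 0 ≤ l) (h1 : l ≤ 1) (b1 b2 : Bundle n) :
    IsStoch (mix l b1 b2) := by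
  constructor
  · intro b; unfold mix pt
    have : (0:ℝ) ≤ 1 - l := by linarith
    split <;> split <;> nlinarith
  · unfold mix
    rw [Finset.sum_add_distrib, ← Finset.mul_sum, ← Finset.mul_sum]
    simp [pt]

lemma phiA_mix (φ : Bundle n → ℝ → ℝ) (l : ℝ) (b1 b2 : Bundle n) (t : ℝ) :
    phiA φ (mix l b1 b2) t = l * φ b1 t + (1 - l) * φ b2 t := by
  unfold phiA mix
  rw [show (∑ b, (l * pt b1 b + (1 - l) * pt b2 b) * φ b t)
      = ∑ b, (l * (pt b1 b * φ b t) + (1 - l) * (pt b2 b * φ b t)) by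
        apply Finset.sum_congr rfl; intros; ring]
  rw [Finset.sum_add_distrib, ← Finset.mul_sum, ← Finset.mul_sum]
  have h1 := phiA_pt φ b1 t
  have h2 := phiA_pt φ b2 t
  unfold phiA at h1 h2
  rw [h1, h2]

lemma sign_nonneg_of {x : ℝ} (h : 0 ≤ x) : 0 ≤ Real.sign x := by
  rcases eq_or_lt_of_le h with h' | h'
  · rw [← h', Real.sign_zero]
  · rw [Real.sign_of_pos h']; norm_num

lemma nonneg_of_sign {x : ℝ} (h : 0 ≤ Real.sign x) : 0 ≤ x := by
  by_contra hx
  push_neg at hx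
  rw [Real.sign_of_neg hx] at h
  norm_num at h

lemma sc_nonneg {g : ℝ → ℝ} {t0 t1 : ℝ} (ht : t0 ≤ t1)
    (hsc : SingleCrossingOn g (Set.Icc t0 t1))
    (h0 : 0 ≤ g t0) (h1 : 0 ≤ g t1) : ∀ t ∈ Set.Icc t0 t1, 0 ≤ g t := by
  intro t htm
  have h0m : t0 ∈ Set.Icc t0 t1 := Set.left_mem_Icc.mpr ht
  have h1m : t1 ∈ Set.Icc t0 t1 := Set.right_mem_Icc.mpr ht
  rcases hsc with hm | hm
  · exact nonneg_of_sign (le_trans (sign_nonneg_of h0) (hm h0m htm htm.1))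
  · exact nonneg_of_sign (le_trans (sign_nonneg_of h1) (hm htm h1m htm.2))

lemma sc_not_zpm {g : ℝ → ℝ} {t0 t1 ts : ℝ} (ht : t0 ≤ t1) (hts : ts ∈ Set.Icc t0 t1)
    (hsc : SingleCrossingOn g (Set.Icc t0 t1))
    (h0 : g t0 = 0) (hp : 0 < g ts) (h1 : g t1 < 0) : False := by
  have h0m : t0 ∈ Set.Icc t0 t1 := Set.left_mem_Icc.mpr ht
  have h1m : t1 ∈ Set.Icc t0 t1 := Set.right_mem_Icc.mpr ht
  rcases hsc with hm | hm
  · have := hm hts h1m hts.2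
    dsimp only at this
    rw [Real.sign_of_pos hp, Real.sign_of_neg h1] at this
    norm_num at this
  · have := hm h0m hts hts.1
    dsimp only at this
    rw [h0, Real.sign_zero, Real.sign_of_pos hp] at this
    norm_num at this

lemma sc_not_mzm {g : ℝ → ℝ} {t0 t1 ts : ℝ} (ht : t0 ≤ t1) (hts : ts ∈ Set.Icc t0 t1)
    (hsc : SingleCrossingOn g (Set.Icc t0 t1))
    (h0 : g t0 < 0) (hp : g ts = 0) (h1 : g t1 < 0) : False := by
  have h0m : t0 ∈ Set.Icc t0 t1 := Set.left_mem_Icc.mpr ht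
  have h1m : t1 ∈ Set.Icc t0 t1 := Set.right_mem_Icc.mpr ht
  rcases hsc with hm | hm
  · have := hm hts h1m hts.2
    dsimp only at this
    rw [hp, Real.sign_zero, Real.sign_of_neg h1] at this
    norm_num at this
  · have := hm h0m hts hts.1
    dsimp only at this
    rw [hp, Real.sign_zero, Real.sign_of_neg h0] at this
    norm_num at this

lemma mediant_lt {a1 b1 a2 b2 : ℝ} (hb1 : 0 < b1) (hb2 : 0 < b2) (h : a2/b2 < a1/b1) :
    a2/b2 < (a1+a2)/(b1+b2) ∧ (a1+a2)/(b1+b2) < a1/b1 := by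
  rw [div_lt_div_iff₀ hb2 hb1] at h
  constructor
  · rw [div_lt_div_iff₀ hb2 (by linarith)]; nlinarith
  · rw [div_lt_div_iff₀ (by linarith) hb1]; nlinarith

lemma slope_chain {m : ℕ} {x y : ℕ → ℝ}
    (hx : ∀ i j, i < j → j < m → x i < x j)
    (hcons : ∀ i, 1 ≤ i → i + 1 < m →
      (y (i+1) - y i) / (x (i+1) - x i) < (y i - y (i-1)) / (x i - x (i-1))) :
    ∀ k i j, j < i → i < k → k < m →
      (y k - y i) / (x k - x i) < (y i - y j) / (x i - x j) := by
  have claim1 : ∀ i j, j < i → i + 1 < m →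
      (y (i+1) - y i) / (x (i+1) - x i) < (y i - y j) / (x i - x j) := by
    intro i
    induction i with
    | zero => intro j hj; omega
    | succ p ih =>
      intro j hj h1
      rcases Nat.lt_succ_iff_lt_or_eq.mp hj with hjp | rfl
      · have h2 := ih j hjp (by omega)
        have hb1 : 0 < x p - x j := sub_pos.mpr (hx j p hjp (by omega))
        have hb2 : 0 < x (p+1) - x p := sub_pos.mpr (hx p (p+1) (by omega) (by omega))
        have hm := mediant_lt hb1 hb2 h2
        have e1 : y p - y j + (y (p+1) - y p) = y (p+1) - y j := by ring
        have e2 : x p - x j + (x (p+1) - x p) = x (p+1) - x j := by ring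
        rw [e1, e2] at hm
        have hc := hcons (p+1) (by omega) (by omega)
        simp only [Nat.add_sub_cancel] at hc
        exact lt_trans hc hm.1
      · have hc := hcons (j+1) (by omega) (by omega)
        simpa using hc
  intro k
  induction k with
  | zero => intro i j _ h; omega
  | succ q ih =>
    intro i j hji hiq hqm
    rcases Nat.lt_succ_iff_lt_or_eq.mp hiq with hiq' | rfl
    · have h2 := ih i j hji hiq' (by omega)
      have h3 := claim1 q i hiq' (by omega)
      have hb1 : 0 < x q - x i := sub_pos.mpr (hx i q hiq' (by omega))
      have hb2 : 0 < x (q+1) - x q := sub_pos.mpr (hx q (q+1) (by omega) (by omega))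
      have hm := mediant_lt hb1 hb2 h3
      have e1 : y q - y i + (y (q+1) - y q) = y (q+1) - y i := by ring
      have e2 : x q - x i + (x (q+1) - x q) = x (q+1) - x i := by ring
      rw [e1, e2] at hm
      exact lt_trans hm.2 h2
    · exact claim1 i j hji hqm

lemma ratio_iff {x1 x2 x3 y1 y2 y3 : ℝ} (ha : x1 < x2) (hb : x2 < x3)
    (hc : y2 < y1) (hd : y3 < y2) :
    ((y1 - y2)/(y2 - y3) < (x1 - x2)/(x2 - x3)) ↔
      ((y3 - y2)/(x3 - x2) < (y2 - y1)/(x2 - x1)) := by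
  have e : (x1 - x2)/(x2 - x3) = (x2 - x1)/(x3 - x2) := by
    rw [div_eq_div_iff (sub_ne_zero.mpr hb.ne) (sub_ne_zero.mpr hb.ne')]
    ring
  rw [e, div_lt_div_iff₀ (by linarith) (by linarith),
    div_lt_div_iff₀ (by linarith) (by linarith)]
  constructor <;> intro h <;> nlinarith

lemma continuousOn_finset_sup' {ι : Type*} (s : Finset ι) (hs : s.Nonempty)
    (f : ι → ℝ → ℝ) (T : Set ℝ) (hf : ∀ j ∈ s, ContinuousOn (f j) T) :
    ContinuousOn (fun t => s.sup' hs (fun j => f j t)) T := by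
  revert hf
  induction hs using Finset.Nonempty.cons_induction with
  | singleton a => intro hf; simpa using hf a (by simp)
  | cons a s ha hs ih =>
    intro hf
    simp only [Finset.sup'_cons hs]
    exact ContinuousOn.sup (hf a (by simp)) (ih (fun j hj => hf j (by simp [hj])))

/-- **Corollary 7.** Under Assumptions MD and SCD*, a menu S is the minimal optimal
menu iff (i) S attains the upper envelope at every type, and (ii) S can be enumerated
so that virtual values at t0 are strictly increasing, virtual values at t1 are strictly
decreasing, and every interior triple satisfies the strict ratio condition. -/
theorem stmt7 {n : ℕ} (hn : 1 ≤ n) (t0 t1 : ℝ) (ht : t0 < t1)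
    (φ : Bundle n → ℝ → ℝ)
    (hcont : ∀ b : Bundle n, ContinuousOn (φ b) (Set.Icc t0 t1))
    (hdist : Distinct φ t0 t1)
    (hmd : MD φ t0 t1)
    (hscd : SCDstar φ t0 t1)
    (S : Finset (Bundle n)) :
    MinimalOptimalMenu φ t0 t1 S ↔
      ((∀ t ∈ Set.Icc t0 t1, ∃ b ∈ S, ∀ b' : Bundle n, φ b' t ≤ φ b t) ∧
       ∃ g : ℕ → Bundle n,
         (∀ i, i < S.card → g i ∈ S) ∧
         (∀ b ∈ S, ∃ i, i < S.card ∧ g i = b) ∧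
         (∀ i j, i < j → j < S.card →
            φ (g i) t0 < φ (g j) t0 ∧ φ (g j) t1 < φ (g i) t1) ∧
         (∀ i, 1 ≤ i → i + 1 < S.card →
            (φ (g (i - 1)) t1 - φ (g i) t1) / (φ (g i) t1 - φ (g (i + 1)) t1) <
              (φ (g (i - 1)) t0 - φ (g i) t0) / (φ (g i) t0 - φ (g (i + 1)) t0))) := by
  classical
  constructor
  · rintro ⟨hopt, hmin⟩
    refine ⟨hopt, ?_⟩
    -- each element of S has a point where it strictly beats all other elements of S
    have key : ∀ b ∈ S, ∃ t ∈ Set.Icc t0 t1,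
        (∀ b' : Bundle n, φ b' t ≤ φ b t) ∧ ∀ b'' ∈ S, b'' ≠ b → φ b'' t < φ b t := by
      intro b hb
      have hne := hmin _ (Finset.erase_ssubset hb)
      rw [OptimalMenu] at hne
      push_neg at hne
      obtain ⟨t, htm, hbad⟩ := hne
      obtain ⟨b0, hb0S, hb0max⟩ := hopt t htm
      have hb0 : b0 = b := by
        by_contra hne'
        obtain ⟨b', hb'⟩ := hbad b0 (Finset.mem_erase.mpr ⟨hne', hb0S⟩)
        exact absurd (hb0max b') (not_le.mpr hb')
      subst hb0
      refine ⟨t, htm, hb0max, ?_⟩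
      intro b'' hb''S hne''
      obtain ⟨b', hb'⟩ := hbad b'' (Finset.mem_erase.mpr ⟨hne'', hb''S⟩)
      exact lt_of_lt_of_le hb' (hb0max b')
    choose tb htbm htbwins using key
    have htbmax : ∀ b, ∀ hb : b ∈ S, ∀ b', φ b' (tb b hb) ≤ φ b (tb b hb) :=
      fun b hb => (htbwins b hb).1
    have htbwin : ∀ b, ∀ hb : b ∈ S, ∀ b'' ∈ S, b'' ≠ b →
        φ b'' (tb b hb) < φ b (tb b hb) := fun b hb => (htbwins b hb).2
    have str : ∀ b, ∀ hb : b ∈ S, ∀ b', ∀ hb' : b' ∈ S, b ≠ b' →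
        (φ b t0 < φ b' t0 ∧ φ b' t1 < φ b t1) ∨
        (φ b' t0 < φ b t0 ∧ φ b t1 < φ b' t1) := by
      intro b hb b' hb' hne
      have h1 : φ b' (tb b hb) < φ b (tb b hb) := htbwin b hb b' hb' (Ne.symm hne)
      have h2 : φ b (tb b' hb') < φ b' (tb b' hb') := htbwin b' hb' b hb hne
      have m0 : t0 ∈ Set.Icc t0 t1 := Set.left_mem_Icc.mpr ht.le
      have m1 : t1 ∈ Set.Icc t0 t1 := Set.right_mem_Icc.mpr ht.le
      rcases hmd b b' with hm | hm
      · left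
        have a1 := hm m0 (htbm b' hb') (htbm b' hb').1
        have a2 := hm (htbm b hb) m1 (htbm b hb).2
        dsimp only at a1 a2
        constructor <;> linarith
      · right
        have a1 := hm m0 (htbm b hb) (htbm b hb).1
        have a2 := hm (htbm b' hb') m1 (htbm b' hb').2
        dsimp only at a1 a2
        constructor <;> linarith
    have hinj : Set.InjOn (fun b => φ b t0) ↑S := by
      intro b hb b' hb' heq
      by_contra hne
      dsimp only at heq
      rcases str b (by simpa using hb) b' (by simpa using hb') hne with h | h <;> linarith [h.1]
    have hXcard : (S.image fun b => φ b t0).card = S.card :=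
      Finset.card_image_of_injOn hinj
    set e := (S.image fun b => φ b t0).orderEmbOfFin hXcard with he
    have hex : ∀ i : Fin S.card, ∃! b, b ∈ S ∧ φ b t0 = e i := by
      intro i
      obtain ⟨b, hb, hfb⟩ :=
        Finset.mem_image.mp (Finset.orderEmbOfFin_mem (S.image fun b => φ b t0) hXcard i)
      refine ⟨b, ⟨hb, hfb⟩, ?_⟩
      rintro c ⟨hc, hfc⟩
      exact hinj (by simpa using hc) (by simpa using hb) (by dsimp only; rw [hfc, hfb])
    set g : ℕ → Bundle n := fun i =>
      if h : i < S.card then Finset.choose (fun b => φ b t0 = e ⟨i, h⟩) S (hex ⟨i, h⟩)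
      else ∅ with hg
    have hgmem : ∀ i, i < S.card → g i ∈ S := by
      intro i h
      rw [hg]; simp only [dif_pos h]
      exact Finset.choose_mem _ _ _
    have hgval : ∀ i (h : i < S.card), φ (g i) t0 = e ⟨i, h⟩ := by
      intro i h
      rw [hg]; simp only [dif_pos h]
      exact Finset.choose_property (fun b => φ b t0 = e ⟨i, h⟩) S (hex ⟨i, h⟩)
    have hxmono : ∀ i j, i < j → j < S.card → φ (g i) t0 < φ (g j) t0 := by
      intro i j hij hj
      rw [hgval i (lt_trans hij hj), hgval j hj]
      exact e.strictMono (by exact Fin.mk_lt_mk.mpr hij)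
    have hymono : ∀ i j, i < j → j < S.card → φ (g j) t1 < φ (g i) t1 := by
      intro i j hij hj
      have hxm := hxmono i j hij hj
      have hne : g i ≠ g j := fun hEq => by rw [hEq] at hxm; exact lt_irrefl _ hxm
      rcases str (g i) (hgmem i (lt_trans hij hj)) (g j) (hgmem j hj) hne with h | h
      · exact h.2
      · linarith [h.1]
    have hgsurj : ∀ b ∈ S, ∃ i, i < S.card ∧ g i = b := by
      intro b hb
      have hmem : φ b t0 ∈ S.image (fun b => φ b t0) := Finset.mem_image_of_mem _ hb
      have hrange := Finset.range_orderEmbOfFin (S.image fun b => φ b t0) hXcard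
      have : φ b t0 ∈ Set.range e := by rw [he, hrange]; simpa using hmem
      obtain ⟨i, hi⟩ := this
      refine ⟨i.1, i.2, ?_⟩
      apply hinj (by simpa using hgmem i.1 i.2) (by simpa using hb)
      show φ (g i.1) t0 = φ b t0
      rw [hgval i.1 i.2, Fin.eta, hi]
    refine ⟨g, hgmem, hgsurj,
      fun i j hij hj => ⟨hxmono i j hij hj, hymono i j hij hj⟩, ?_⟩
    intro i hi1 hi1m
    have him : i < S.card := by omega
    have hidx : i - 1 < i := by omega
    have hxa : φ (g (i-1)) t0 < φ (g i) t0 := hxmono (i-1) i hidx him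
    have hxb : φ (g i) t0 < φ (g (i+1)) t0 := hxmono i (i+1) (by omega) hi1m
    have hya : φ (g i) t1 < φ (g (i-1)) t1 := hymono (i-1) i hidx him
    have hyb : φ (g (i+1)) t1 < φ (g i) t1 := hymono i (i+1) (by omega) hi1m
    rw [ratio_iff hxa hxb hya hyb]
    rw [div_lt_div_iff₀ (by linarith) (by linarith)]
    by_contra hcon
    push_neg at hcon
    have hc : (0:ℝ) < φ (g (i-1)) t1 - φ (g i) t1 := by linarith
    have hd : (0:ℝ) < φ (g i) t1 - φ (g (i+1)) t1 := by linarith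
    have hcd : (0:ℝ) < (φ (g (i-1)) t1 - φ (g i) t1) + (φ (g i) t1 - φ (g (i+1)) t1) := by
      linarith
    set l : ℝ := (φ (g i) t1 - φ (g (i+1)) t1) /
      ((φ (g (i-1)) t1 - φ (g i) t1) + (φ (g i) t1 - φ (g (i+1)) t1)) with hldef
    have hl0 : 0 < l := div_pos hd hcd
    have hl1 : l < 1 := (div_lt_one hcd).mpr (by linarith)
    have hlmul : l * ((φ (g (i-1)) t1 - φ (g i) t1) + (φ (g i) t1 - φ (g (i+1)) t1))
        = φ (g i) t1 - φ (g (i+1)) t1 := div_mul_cancel₀ _ (ne_of_gt hcd)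
    have hv1 : l * φ (g (i-1)) t1 + (1 - l) * φ (g (i+1)) t1 - φ (g i) t1 = 0 := by
      linear_combination hlmul
    have e0 : (l * φ (g (i-1)) t0 + (1 - l) * φ (g (i+1)) t0 - φ (g i) t0) *
        ((φ (g (i-1)) t1 - φ (g i) t1) + (φ (g i) t1 - φ (g (i+1)) t1))
        = (φ (g i) t1 - φ (g (i+1)) t1) * (φ (g (i-1)) t0 - φ (g (i+1)) t0) +
          ((φ (g (i-1)) t1 - φ (g i) t1) + (φ (g i) t1 - φ (g (i+1)) t1)) *
            (φ (g (i+1)) t0 - φ (g i) t0) := by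
      linear_combination (φ (g (i-1)) t0 - φ (g (i+1)) t0) * hlmul
    have hv0 : 0 ≤ l * φ (g (i-1)) t0 + (1 - l) * φ (g (i+1)) t0 - φ (g i) t0 := by
      nlinarith [e0, hcon, hcd]
    have hsc1 := hscd _ _ (isStoch_mix hl0.le hl1.le (g (i-1)) (g (i+1))) (isStoch_pt (g i))
    have hval : ∀ t, phiA φ (mix l (g (i-1)) (g (i+1))) t - phiA φ (pt (g i)) t
        = l * φ (g (i-1)) t + (1 - l) * φ (g (i+1)) t - φ (g i) t := fun t => by
      rw [phiA_mix, phiA_pt]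
    have hge := sc_nonneg ht.le hsc1
      (by rw [hval t0]; exact hv0)
      (by rw [hval t1, hv1])
      (tb (g i) (hgmem i him)) (htbm (g i) (hgmem i him))
    rw [hval] at hge
    have hw1 : φ (g (i-1)) (tb (g i) (hgmem i him)) < φ (g i) (tb (g i) (hgmem i him)) := by
      apply htbwin (g i) (hgmem i him) (g (i-1)) (hgmem (i-1) (by omega))
      intro hEq; rw [hEq] at hxa; exact lt_irrefl _ hxa
    have hw2 : φ (g (i+1)) (tb (g i) (hgmem i him)) < φ (g i) (tb (g i) (hgmem i him)) := by
      apply htbwin (g i) (hgmem i him) (g (i+1)) (hgmem (i+1) hi1m)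
      intro hEq; rw [hEq] at hxb; exact lt_irrefl _ hxb
    linarith [mul_pos hl0 (sub_pos.mpr hw1),
      mul_pos (by linarith : (0:ℝ) < 1 - l) (sub_pos.mpr hw2)]
  · rintro ⟨hopt, g, hgmem, hgsurj, hord, hratio⟩
    refine ⟨hopt, ?_⟩
    intro S' hS' hoptS'
    obtain ⟨b, hbS, hbnS'⟩ := Finset.exists_of_ssubset hS'
    obtain ⟨i, him, rfl⟩ := hgsurj b hbS
    have key : ∃ ts ∈ Set.Icc t0 t1, ∀ b' ∈ S, b' ≠ g i → φ b' ts < φ (g i) ts := by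
      by_cases hi0 : i = 0
      · subst hi0
        refine ⟨t1, Set.right_mem_Icc.mpr ht.le, ?_⟩
        intro b' hb' hne
        obtain ⟨j, hj, rfl⟩ := hgsurj b' hb'
        have hj0 : 0 < j := Nat.pos_of_ne_zero (fun h => hne (congrArg g h))
        exact (hord 0 j hj0 hj).2
      · by_cases hilast : S.card ≤ i + 1
        · refine ⟨t0, Set.left_mem_Icc.mpr ht.le, ?_⟩
          intro b' hb' hne
          obtain ⟨j, hj, rfl⟩ := hgsurj b' hb'
          have hji : j < i := by
            rcases Nat.lt_or_ge j i with h | h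
            · exact h
            · exact absurd (congrArg g (by omega : j = i)) hne
          exact (hord j i hji him).1
        · -- interior case
          push_neg at hilast
          have hi0' : 0 < i := Nat.pos_of_ne_zero hi0
          by_contra hno
          push_neg at hno
          have pick : ∃ ts ∈ Set.Icc t0 t1, ∃ j0 k0, j0 < i ∧ i < k0 ∧ k0 < S.card ∧
              0 ≤ φ (g j0) ts - φ (g i) ts ∧ 0 ≤ φ (g k0) ts - φ (g i) ts := by
            have hJne : (Finset.range i).Nonempty := ⟨0, Finset.mem_range.mpr hi0'⟩
            have hKne : (Finset.Ico (i+1) S.card).Nonempty :=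
              ⟨i+1, Finset.mem_Ico.mpr ⟨le_refl _, hilast⟩⟩
            set F : ℝ → ℝ :=
              fun t => (Finset.range i).sup' hJne (fun j => φ (g j) t - φ (g i) t) with hF
            set G : ℝ → ℝ :=
              fun t => (Finset.Ico (i+1) S.card).sup' hKne (fun j => φ (g j) t - φ (g i) t)
              with hG
            have hcontF : ContinuousOn F (Set.Icc t0 t1) :=
              continuousOn_finset_sup' _ hJne _ _ (fun j _ => (hcont (g j)).sub (hcont (g i)))
            have hcontG : ContinuousOn G (Set.Icc t0 t1) :=
              continuousOn_finset_sup' _ hKne _ _ (fun j _ => (hcont (g j)).sub (hcont (g i)))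
            have hF0 : F t0 < 0 := by
              refine (Finset.sup'_lt_iff hJne).mpr ?_
              intro j hj
              have := (hord j i (Finset.mem_range.mp hj) him).1
              linarith
            have hG0 : 0 < G t0 := by
              refine (Finset.lt_sup'_iff hKne).mpr ?_
              refine ⟨i+1, Finset.mem_Ico.mpr ⟨le_refl _, hilast⟩, ?_⟩
              have := (hord i (i+1) (by omega) hilast).1
              linarith
            have hF1 : 0 < F t1 := by
              refine (Finset.lt_sup'_iff hJne).mpr ?_
              refine ⟨0, Finset.mem_range.mpr hi0', ?_⟩
              have := (hord 0 i hi0' him).2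
              linarith
            have hG1 : G t1 < 0 := by
              refine (Finset.sup'_lt_iff hKne).mpr ?_
              intro j hj
              obtain ⟨h1, h2⟩ := Finset.mem_Ico.mp hj
              have := (hord i j (by omega) h2).2
              linarith
            have himg := intermediate_value_Icc ht.le (hcontF.sub hcontG)
              (Set.mem_Icc.mpr ⟨by linarith, by linarith⟩ :
                (0:ℝ) ∈ Set.Icc (F t0 - G t0) (F t1 - G t1))
            obtain ⟨ts, htsm, htseq⟩ := himg
            rw [Pi.sub_apply] at htseq
            obtain ⟨b', hb'S, hb'ne, hb'ge⟩ := hno ts htsm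
            obtain ⟨j', hj'm, rfl⟩ := hgsurj b' hb'S
            have hFts : 0 ≤ F ts ∧ 0 ≤ G ts := by
              rcases Nat.lt_or_ge j' i with h | h
              · have hle : φ (g j') ts - φ (g i) ts ≤ F ts :=
                  Finset.le_sup' (fun j => φ (g j) ts - φ (g i) ts) (Finset.mem_range.mpr h)
                constructor <;> linarith
              · have hj'i : i < j' :=
                  lt_of_le_of_ne h (fun hEq => hb'ne (congrArg g hEq.symm))
                have hle : φ (g j') ts - φ (g i) ts ≤ G ts :=
                  Finset.le_sup' (fun j => φ (g j) ts - φ (g i) ts)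
                    (Finset.mem_Ico.mpr ⟨hj'i, hj'm⟩)
                constructor <;> linarith
            obtain ⟨j0, hj0m, hFj0⟩ :=
              Finset.exists_mem_eq_sup' hJne (fun j => φ (g j) ts - φ (g i) ts)
            obtain ⟨k0, hk0m, hGk0⟩ :=
              Finset.exists_mem_eq_sup' hKne (fun j => φ (g j) ts - φ (g i) ts)
            have hik0 : i < k0 := by have := (Finset.mem_Ico.mp hk0m).1; omega
            refine ⟨ts, htsm, j0, k0, Finset.mem_range.mp hj0m, hik0,
              (Finset.mem_Ico.mp hk0m).2, ?_, ?_⟩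
            · have hq : F ts = φ (g j0) ts - φ (g i) ts := hFj0
              linarith [hFts.1]
            · have hq : G ts = φ (g k0) ts - φ (g i) ts := hGk0
              linarith [hFts.2]
          obtain ⟨ts, htsm, j0, k0, hj0i, hik0, hk0c, hDj, hDk⟩ := pick
          have hcons : ∀ p, 1 ≤ p → p + 1 < S.card →
              (φ (g (p+1)) t1 - φ (g p) t1) / (φ (g (p+1)) t0 - φ (g p) t0) <
              (φ (g p) t1 - φ (g (p-1)) t1) / (φ (g p) t0 - φ (g (p-1)) t0) := by
            intro p hp hp1
            have h1 := (hord (p-1) p (by omega) (by omega)).1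
            have h2 := (hord p (p+1) (by omega) hp1).1
            have h3 := (hord (p-1) p (by omega) (by omega)).2
            have h4 := (hord p (p+1) (by omega) hp1).2
            exact (ratio_iff h1 h2 h3 h4).mp (hratio p hp hp1)
          have hslope := slope_chain (x := fun p => φ (g p) t0) (y := fun p => φ (g p) t1)
            (fun p q hpq hq => (hord p q hpq hq).1) hcons k0 i j0 hj0i hik0 hk0c
          have hxji : φ (g j0) t0 < φ (g i) t0 := (hord j0 i hj0i him).1
          have hxik : φ (g i) t0 < φ (g k0) t0 := (hord i k0 hik0 hk0c).1
          have hyij : φ (g i) t1 < φ (g j0) t1 := (hord j0 i hj0i him).2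
          have hyki : φ (g k0) t1 < φ (g i) t1 := (hord i k0 hik0 hk0c).2
          rw [div_lt_div_iff₀ (by linarith) (by linarith)] at hslope
          have hA : (0:ℝ) < φ (g i) t0 - φ (g j0) t0 := by linarith
          have hB : (0:ℝ) < φ (g k0) t0 - φ (g i) t0 := by linarith
          have hAB : (0:ℝ) < φ (g k0) t0 - φ (g j0) t0 := by linarith
          set l0 : ℝ := (φ (g k0) t0 - φ (g i) t0) / (φ (g k0) t0 - φ (g j0) t0) with hl0def
          have hl0pos : 0 < l0 := div_pos hB hAB
          have hl0lt : l0 < 1 := (div_lt_one hAB).mpr (by linarith)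
          have hl0mul : l0 * (φ (g k0) t0 - φ (g j0) t0) = φ (g k0) t0 - φ (g i) t0 :=
            div_mul_cancel₀ _ (ne_of_gt hAB)
          have hcx : l0 * φ (g j0) t0 + (1 - l0) * φ (g k0) t0 = φ (g i) t0 := by
            linear_combination -hl0mul
          have ecy : (l0 * φ (g j0) t1 + (1 - l0) * φ (g k0) t1 - φ (g i) t1) *
              (φ (g k0) t0 - φ (g j0) t0)
              = (φ (g k0) t0 - φ (g i) t0) * (φ (g j0) t1 - φ (g k0) t1) +
                (φ (g k0) t0 - φ (g j0) t0) * (φ (g k0) t1 - φ (g i) t1) := by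
            linear_combination (φ (g j0) t1 - φ (g k0) t1) * hl0mul
          have hcy : l0 * φ (g j0) t1 + (1 - l0) * φ (g k0) t1 < φ (g i) t1 := by
            nlinarith [ecy, hslope, hAB]
          have hsum : 0 ≤ l0 * (φ (g j0) ts - φ (g i) ts) +
              (1 - l0) * (φ (g k0) ts - φ (g i) ts) :=
            add_nonneg (mul_nonneg hl0pos.le hDj) (mul_nonneg (by linarith) hDk)
          have hval1 : ∀ l' : ℝ, ∀ t, phiA φ (mix l' (g j0) (g k0)) t - phiA φ (pt (g i)) t
              = l' * φ (g j0) t + (1 - l') * φ (g k0) t - φ (g i) t := fun l' t => by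
            rw [phiA_mix, phiA_pt]
          rcases eq_or_lt_of_le hsum with heq | hpos
          · -- degenerate case: both differences vanish at ts
            have hprod1 : l0 * (φ (g j0) ts - φ (g i) ts) = 0 := by
              have h2 := mul_nonneg (by linarith : (0:ℝ) ≤ 1 - l0) hDk
              have h3 := mul_nonneg hl0pos.le hDj
              linarith
            have hprod2 : (1 - l0) * (φ (g k0) ts - φ (g i) ts) = 0 := by
              have h3 := mul_nonneg hl0pos.le hDj
              linarith
            have hDj0 : φ (g j0) ts - φ (g i) ts = 0 :=
              (mul_eq_zero.mp hprod1).resolve_left (ne_of_gt hl0pos)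
            have hDk0 : φ (g k0) ts - φ (g i) ts = 0 :=
              (mul_eq_zero.mp hprod2).resolve_left (by intro h; linarith [hl0lt] )
            have hY : (0:ℝ) < φ (g j0) t1 - φ (g k0) t1 := by linarith
            set mu : ℝ := (φ (g i) t1 - φ (g k0) t1) / (φ (g j0) t1 - φ (g k0) t1) with hmudef
            have hmul : mu * (φ (g j0) t1 - φ (g k0) t1) = φ (g i) t1 - φ (g k0) t1 :=
              div_mul_cancel₀ _ (ne_of_gt hY)
            have hl0mu : l0 < mu := by
              rw [hmudef, lt_div_iff₀ hY]
              linarith [hcy]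
            have hmu1 : mu < 1 := by
              rw [hmudef, div_lt_one hY]; linarith
            set l1 : ℝ := (l0 + mu)/2 with hl1def
            have hl1a : l0 < l1 := by rw [hl1def]; linarith
            have hl1b : l1 < mu := by rw [hl1def]; linarith
            have hl1pos : 0 < l1 := by linarith
            have hl1lt : l1 < 1 := by linarith
            have hsc2 := hscd _ _ (isStoch_mix hl1pos.le hl1lt.le (g j0) (g k0))
              (isStoch_pt (g i))
            refine sc_not_mzm ht.le htsm hsc2 ?_ ?_ ?_
            · rw [hval1 l1 t0]
              have hrew : l1 * φ (g j0) t0 + (1 - l1) * φ (g k0) t0 - φ (g i) t0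
                  = (l1 - l0) * (φ (g j0) t0 - φ (g k0) t0) := by
                linear_combination hcx
              rw [hrew]
              exact mul_neg_of_pos_of_neg (by linarith) (by linarith)
            · rw [hval1 l1 ts]
              linear_combination l1 * hDj0 + (1 - l1) * hDk0
            · rw [hval1 l1 t1]
              linarith [mul_lt_mul_of_pos_right hl1b hY, hmul]
          · have hsc2 := hscd _ _ (isStoch_mix hl0pos.le hl0lt.le (g j0) (g k0))
              (isStoch_pt (g i))
            refine sc_not_zpm ht.le htsm hsc2 ?_ ?_ ?_
            · rw [hval1 l0 t0]
              linear_combination hcx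
            · rw [hval1 l0 ts]
              linarith [hpos]
            · rw [hval1 l0 t1]
              linarith [hcy]
    obtain ⟨ts, hts, hwin⟩ := key
    obtain ⟨b'', hb''S', hb''max⟩ := hoptS' ts hts
    have hb''S : b'' ∈ S := hS'.subset hb''S'
    have hne2 : b'' ≠ g i := fun h => hbnS' (h ▸ hb''S')
    have := hwin b'' hb''S hne2
    linarith [hb''max (g i)]

end Paper
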